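/- For every M₁ > 0 there exist ξ₀ > 0 and a constant M > 0 such that for all 0 < ξ < ξ₀, all μ ∈ (0,1), all integers n ≥ 1, all θ₀ ∈ ℝ and all continuous functions 𝐔⊕, 𝐔⊖ : [0,2π] → ℝ⁴ with ‖𝐔⊕‖ ≤ 2M₁μξ⁶ and ‖𝐔⊖‖ ≤ 2M₁μξ⁶, the map 𝒢₁ defined by 𝒢₁(𝐔)(T) = μ·F₁(𝐔₀ᵉ(T)+𝐔(T)) satisfies ‖𝒢₁(𝐔⊕) − 𝒢₁(𝐔⊖)‖ ≤ (M·μ·ξ⁶/n)·‖𝐔⊕ − 𝐔⊖‖. -/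

import Mathlib

open Real Set

noncomputable section

/-- Points of the phase space `ℝ⁴`, with coordinates `(𝒰, 𝒱, 𝒰', 𝒱')`. -/
abbrev V4 := Fin 4 → ℝ

/-- The unperturbed (two-body) vector field `F₀`. -/
def F0 (n : ℕ) (ξ : ℝ) (v : V4) : V4 :=
  ![v 2, v 3,
    -(n:ℝ)^2 * v 0 + 8*((v 0)^2+(v 1)^2)*(v 3)*ξ^3 + 12*((v 0)^2+(v 1)^2)^2*(v 0)*ξ^6,
    -(n:ℝ)^2 * v 1 - 8*((v 0)^2+(v 1)^2)*(v 2)*ξ^3 + 12*((v 0)^2+(v 1)^2)^2*(v 1)*ξ^6]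

/-- The function `r₂` appearing in the perturbation `F₁`. -/
def r2 (μ : ℝ) (n : ℕ) (ξ U V : ℝ) : ℝ :=
  Real.sqrt (1 + 4*(1-μ)^((1:ℝ)/3)*(U^2-V^2)*ξ^2/(n:ℝ)^((2:ℝ)/3)
    + 4*(1-μ)^((2:ℝ)/3)*(U^2+V^2)^2*ξ^4/(n:ℝ)^((4:ℝ)/3))

/-- The perturbing vector field `F₁`. -/
def F1 (μ : ℝ) (n : ℕ) (ξ : ℝ) (v : V4) : V4 :=
  ![0, 0,
    2*((n:ℝ)^((4:ℝ)/3)/(1-μ)^((2:ℝ)/3)*(1/r2 μ n ξ (v 0) (v 1) - 1)*ξ^2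
       - 4*((v 0)^2+(v 1)^2)^2*ξ^6/(r2 μ n ξ (v 0) (v 1))^3
       - 2*(n:ℝ)^((2:ℝ)/3)*((v 0)^2+(v 1)^2)*ξ^4/((1-μ)^((1:ℝ)/3)*(r2 μ n ξ (v 0) (v 1))^3)
       + 4*(n:ℝ)^((2:ℝ)/3)*(v 0)^2*ξ^4/(1-μ)^((1:ℝ)/3)) * (v 0),
    2*((n:ℝ)^((4:ℝ)/3)/(1-μ)^((2:ℝ)/3)*(1/r2 μ n ξ (v 0) (v 1) - 1)*ξ^2
       - 4*((v 0)^2+(v 1)^2)^2*ξ^6/(r2 μ n ξ (v 0) (v 1))^3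
       + 2*(n:ℝ)^((2:ℝ)/3)*((v 0)^2+(v 1)^2)*ξ^4/((1-μ)^((1:ℝ)/3)*(r2 μ n ξ (v 0) (v 1))^3)
       - 4*(n:ℝ)^((2:ℝ)/3)*(v 1)^2*ξ^4/(1-μ)^((1:ℝ)/3)) * (v 1)]

/-- The sidereal time `t(T) = 2[T − cos(nT)sin(nT)/n]ξ³`. -/
def tOf (n : ℕ) (ξ : ℝ) (T : ℝ) : ℝ :=
  2*(T - Real.cos ((n:ℝ)*T)*Real.sin ((n:ℝ)*T)/(n:ℝ))*ξ^3

/-- First component of the unperturbed ejection solution. -/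
def U0s (n : ℕ) (ξ θ₀ : ℝ) (T : ℝ) : ℝ :=
  Real.cos (θ₀ - tOf n ξ T/2) * Real.sin ((n:ℝ)*T)

/-- Second component of the unperturbed ejection solution. -/
def V0s (n : ℕ) (ξ θ₀ : ℝ) (T : ℝ) : ℝ :=
  Real.sin (θ₀ - tOf n ξ T/2) * Real.sin ((n:ℝ)*T)

/-- The unperturbed ejection solution `𝐔₀ᵉ(T)` of `𝐔' = F₀(𝐔)` with initial condition
`(0,0,n cos θ₀, n sin θ₀)`. -/
def U0e (n : ℕ) (ξ θ₀ : ℝ) (T : ℝ) : V4 :=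
  ![U0s n ξ θ₀ T, V0s n ξ θ₀ T, deriv (U0s n ξ θ₀) T, deriv (V0s n ξ θ₀) T]

/-- The Jacobian matrix `DF₀` of the vector field `F₀`. -/
def DF0 (n : ℕ) (ξ : ℝ) (v : V4) : Matrix (Fin 4) (Fin 4) ℝ :=
  Matrix.of fun i j => deriv (fun s : ℝ => F0 n ξ (Function.update v j s) i) (v j)

/-- The nonlinear part `𝒢(𝐔)(T)` of the equation for the perturbation `𝐔₁`. -/
def Gmap (μ : ℝ) (n : ℕ) (ξ θ₀ : ℝ) (U : ℝ → V4) (T : ℝ) : V4 :=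
  μ • F1 μ n ξ (U0e n ξ θ₀ T + U T) + F0 n ξ (U0e n ξ θ₀ T + U T)
    - F0 n ξ (U0e n ξ θ₀ T) - (DF0 n ξ (U0e n ξ θ₀ T)).mulVec (U T)

/-- The fixed-point operator `H{𝐔}(T) = X(T)·∫₀ᵀ X(s)⁻¹ 𝒢(𝐔)(s) ds`. -/
def Hop (μ : ℝ) (n : ℕ) (ξ θ₀ : ℝ) (X : ℝ → Matrix (Fin 4) (Fin 4) ℝ)
    (U : ℝ → V4) (T : ℝ) : V4 :=
  (X T).mulVec (∫ s in (0:ℝ)..T, ((X s)⁻¹).mulVec (Gmap μ n ξ θ₀ U s))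

/-- The weighted sup-norm `‖𝐔‖ = sup_{T∈[0,2π]} (n|𝒰| + n|𝒱| + |𝒰'| + |𝒱'|)`. -/
def wnorm (n : ℕ) (U : ℝ → V4) : ℝ :=
  sSup ((fun T => (n:ℝ)*|U T 0| + (n:ℝ)*|U T 1| + |U T 2| + |U T 3|) '' Set.Icc 0 (2*π))

/-- `X` is the fundamental matrix solution of the linearized system
`Y' = DF₀(𝐔₀ᵉ(T))Y` with `X(0) = Id`. -/
def IsFundMat (n : ℕ) (ξ θ₀ : ℝ) (X : ℝ → Matrix (Fin 4) (Fin 4) ℝ) : Prop :=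
  X 0 = 1 ∧ ∀ T ∈ Set.Icc (0:ℝ) (2*π), ∀ i j : Fin 4,
    HasDerivAt (fun s => X s i j) ((DF0 n ξ (U0e n ξ θ₀ T) * X T) i j) T

/-- `Ue` is the ejection solution of the full system `𝐔' = F₀(𝐔) + μF₁(𝐔)` with
initial condition `(0,0,n cos θ₀, n sin θ₀)`, defined on `[0,2π]`. -/
def IsFullEjection (μ : ℝ) (n : ℕ) (ξ θ₀ : ℝ) (Ue : ℝ → V4) : Prop :=
  Ue 0 = ![0, 0, (n:ℝ)*Real.cos θ₀, (n:ℝ)*Real.sin θ₀] ∧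
  ∀ T ∈ Set.Icc (0:ℝ) (2*π), ∀ i : Fin 4,
    HasDerivAt (fun s => Ue s i) ((F0 n ξ (Ue T) + μ • F1 μ n ξ (Ue T)) i) T

/-- The map `𝒢₁(𝐔)(T) = μ F₁(𝐔₀ᵉ(T)+𝐔(T))`. -/
def G1map (μ : ℝ) (n : ℕ) (ξ θ₀ : ℝ) (U : ℝ → V4) (T : ℝ) : V4 :=
  μ • F1 μ n ξ (U0e n ξ θ₀ T + U T)


/-- The box `|U| ≤ 2, |V| ≤ 2`. -/
def GBox : Set (ℝ × ℝ) := {p | |p.1| ≤ 2 ∧ |p.2| ≤ 2}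

/-- `f` is bounded by `B` and Lipschitz with constant `L` (w.r.t. the ℓ¹ distance) on `GBox`. -/
def Good (B L : ℝ) (f : ℝ × ℝ → ℝ) : Prop :=
  0 ≤ B ∧ 0 ≤ L ∧ (∀ p ∈ GBox, |f p| ≤ B) ∧
    (∀ p ∈ GBox, ∀ q ∈ GBox, |f p - f q| ≤ L * (|p.1 - q.1| + |p.2 - q.2|))

namespace Good

lemma mono {B L B' L' : ℝ} {f : ℝ × ℝ → ℝ} (h : Good B L f) (hB : B ≤ B') (hL : L ≤ L') :
    Good B' L' f := by
  obtain ⟨h0, h1, h2, h3⟩ := h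
  refine ⟨le_trans h0 hB, le_trans h1 hL, fun p hp => le_trans (h2 p hp) hB,
    fun p hp q hq => le_trans (h3 p hp q hq) ?_⟩
  have : 0 ≤ |p.1 - q.1| + |p.2 - q.2| := by positivity
  nlinarith

lemma of_eq {B L : ℝ} {f g : ℝ × ℝ → ℝ} (h : Good B L f) (he : ∀ p, f p = g p) :
    Good B L g := by simpa [funext he] using h

lemma const (k : ℝ) : Good |k| 0 (fun _ => k) :=
  ⟨abs_nonneg _, le_refl _, fun p _ => le_refl _, fun p _ q _ => by simp⟩

lemma fst : Good 2 1 (fun p => p.1) :=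
  ⟨by norm_num, by norm_num, fun p hp => hp.1, fun p _ q _ => by
    have := abs_nonneg (p.2 - q.2); nlinarith [abs_nonneg (p.1 - q.1)]⟩

lemma snd : Good 2 1 (fun p => p.2) :=
  ⟨by norm_num, by norm_num, fun p hp => hp.2, fun p _ q _ => by
    have := abs_nonneg (p.1 - q.1); nlinarith [abs_nonneg (p.2 - q.2)]⟩

lemma add {B1 L1 B2 L2 : ℝ} {f g : ℝ × ℝ → ℝ} (hf : Good B1 L1 f) (hg : Good B2 L2 g) :
    Good (B1 + B2) (L1 + L2) (fun p => f p + g p) := by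
  obtain ⟨a0, a1, a2, a3⟩ := hf; obtain ⟨b0, b1, b2, b3⟩ := hg
  refine ⟨by linarith, by linarith, fun p hp => ?_, fun p hp q hq => ?_⟩
  · exact le_trans (abs_add_le _ _) (by linarith [a2 p hp, b2 p hp])
  · calc |f p + g p - (f q + g q)| ≤ |f p - f q| + |g p - g q| := by
          have : f p + g p - (f q + g q) = (f p - f q) + (g p - g q) := by ring
          rw [this]; exact abs_add_le _ _
      _ ≤ (L1 + L2) * (|p.1 - q.1| + |p.2 - q.2|) := by
          have := a3 p hp q hq; have := b3 p hp q hq; linarith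

lemma mul {B1 L1 B2 L2 : ℝ} {f g : ℝ × ℝ → ℝ} (hf : Good B1 L1 f) (hg : Good B2 L2 g) :
    Good (B1 * B2) (B1 * L2 + B2 * L1) (fun p => f p * g p) := by
  obtain ⟨a0, a1, a2, a3⟩ := hf; obtain ⟨b0, b1, b2, b3⟩ := hg
  refine ⟨by positivity, by positivity, fun p hp => ?_, fun p hp q hq => ?_⟩
  · rw [abs_mul]; exact mul_le_mul (a2 p hp) (b2 p hp) (abs_nonneg _) a0
  · have key : f p * g p - f q * g q = f p * (g p - g q) + g q * (f p - f q) := by ring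
    calc |f p * g p - f q * g q| ≤ |f p| * |g p - g q| + |g q| * |f p - f q| := by
          rw [key]; exact le_trans (abs_add_le _ _) (by rw [abs_mul, abs_mul])
      _ ≤ B1 * (L2 * (|p.1 - q.1| + |p.2 - q.2|)) + B2 * (L1 * (|p.1 - q.1| + |p.2 - q.2|)) := by
          gcongr
          · exact a2 p hp
          · exact b3 p hp q hq
          · exact b2 q hq
          · exact a3 p hp q hq
      _ = (B1 * L2 + B2 * L1) * (|p.1 - q.1| + |p.2 - q.2|) := by ring

lemma cmul {B L K k : ℝ} {f : ℝ × ℝ → ℝ} (hf : Good B L f) (hk : |k| ≤ K) :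
    Good (K * B) (K * L) (fun p => k * f p) := by
  obtain ⟨a0, a1, a2, a3⟩ := hf
  have hK : 0 ≤ K := le_trans (abs_nonneg k) hk
  refine ⟨by positivity, by positivity, fun p hp => ?_, fun p hp q hq => ?_⟩
  · rw [abs_mul]; exact mul_le_mul hk (a2 p hp) (abs_nonneg _) hK
  · have : k * f p - k * f q = k * (f p - f q) := by ring
    rw [this, abs_mul]
    calc |k| * |f p - f q| ≤ K * (L * (|p.1 - q.1| + |p.2 - q.2|)) :=
          mul_le_mul hk (a3 p hp q hq) (abs_nonneg _) hK
      _ = K * L * (|p.1 - q.1| + |p.2 - q.2|) := by ring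

lemma inv {B L ε : ℝ} {f : ℝ × ℝ → ℝ} (hf : Good B L f) (hε : 0 < ε)
    (hlb : ∀ p ∈ GBox, ε ≤ f p) :
    Good ε⁻¹ (L * (ε * ε)⁻¹) (fun p => (f p)⁻¹) := by
  obtain ⟨a0, a1, a2, a3⟩ := hf
  refine ⟨by positivity, by positivity, fun p hp => ?_, fun p hp q hq => ?_⟩
  · have hfp : 0 < f p := lt_of_lt_of_le hε (hlb p hp)
    rw [abs_of_pos (by positivity)]
    exact inv_anti₀ hε (hlb p hp)
  · have hfp : 0 < f p := lt_of_lt_of_le hε (hlb p hp)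
    have hfq : 0 < f q := lt_of_lt_of_le hε (hlb q hq)
    have key : (f p)⁻¹ - (f q)⁻¹ = (f q - f p) * (f p * f q)⁻¹ := by
      field_simp
    rw [key, abs_mul, abs_of_pos (show (0:ℝ) < (f p * f q)⁻¹ by positivity)]
    calc |f q - f p| * (f p * f q)⁻¹ ≤ (L * (|p.1 - q.1| + |p.2 - q.2|)) * (ε * ε)⁻¹ := by
          apply mul_le_mul
          · rw [abs_sub_comm]; exact a3 p hp q hq
          · apply inv_anti₀ (by positivity)
            exact mul_le_mul (hlb p hp) (hlb q hq) (le_of_lt hε) (le_of_lt hfp)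
          · positivity
          · positivity
      _ = L * (ε * ε)⁻¹ * (|p.1 - q.1| + |p.2 - q.2|) := by ring

end Good

noncomputable def sfn (p : ℝ × ℝ) : ℝ := p.1^2 + p.2^2
def dfn (p : ℝ × ℝ) : ℝ := p.1^2 - p.2^2
noncomputable def wfn (c m ξ : ℝ) (p : ℝ × ℝ) : ℝ :=
  4*c*(dfn p)*ξ^2/m + 4*c^2*(sfn p)^2*ξ^4/m^2
noncomputable def rfn (c m ξ : ℝ) (p : ℝ × ℝ) : ℝ := Real.sqrt (1 + wfn c m ξ p)

/-- The rescaled coefficient function of `F₁`. -/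
noncomputable def PhiF (c m ξ sgn : ℝ) (p : ℝ × ℝ) : ℝ :=
  -4*(sfn p)^2/(rfn c m ξ p*(1+rfn c m ξ p)) - 4*(sfn p)^2/(rfn c m ξ p)^3
  + (4*(dfn p) + 4*c*(sfn p)^2*ξ^2/m) *
    (2*(dfn p)*(rfn c m ξ p+2)/(rfn c m ξ p*(1+rfn c m ξ p)^2)
      + sgn*(2*(sfn p)*((rfn c m ξ p)^2+rfn c m ξ p+1)/((rfn c m ξ p)^3*(1+rfn c m ξ p))))

section Params

variable {c m ξ : ℝ} (hc : 0 < c) (hc1 : c ≤ 1) (hm : 1 ≤ m) (hξ : 0 < ξ) (hξ1 : ξ ≤ 1/10)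

lemma good_sf : Good 8 8 sfn :=
  ((Good.fst.mul Good.fst).add (Good.snd.mul Good.snd)).of_eq (fun p => by simp [sfn]; ring) |>.mono
    (by norm_num) (by norm_num)

lemma good_df : Good 8 8 dfn := by
  have := (Good.fst.mul Good.fst).add ((Good.cmul (K := 1) (k := -1)
    (Good.snd.mul Good.snd) (by norm_num)))
  exact (this.of_eq (fun p => by simp [dfn]; ring)).mono (by norm_num) (by norm_num)

include hc hc1 hm hξ hξ1 in
lemma good_wf : Good (1/2) (1/2) (wfn c m ξ) := by
  have hk1 : |4*c*ξ^2/m| ≤ 1/25 := by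
    rw [abs_of_pos (by positivity)]
    rw [div_le_iff₀ (by positivity)]
    nlinarith
  have hk2 : |4*c^2*ξ^4/m^2| ≤ 1/2500 := by
    rw [abs_of_pos (by positivity)]
    rw [div_le_iff₀ (by positivity)]
    have h4 : ξ^4 ≤ (1/10)^4 := by
      calc ξ^4 = (ξ^2)^2 := by ring
        _ ≤ ((1/10)^2)^2 := by
              have h2 : ξ^2 ≤ (1/10)^2 := by nlinarith
              nlinarith [sq_nonneg ξ]
        _ = (1/10)^4 := by ring
    nlinarith [sq_nonneg c, sq_nonneg m, hm]
  have h1 := Good.cmul good_df hk1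
  have h2 := Good.cmul (good_sf.mul good_sf) hk2
  refine ((h1.add h2).of_eq (fun p => ?_)).mono (by norm_num) (by norm_num)
  simp only [wfn]; ring

include hc hc1 hm hξ hξ1 in
lemma wf_bounds : ∀ p ∈ GBox, 1/2 ≤ 1 + wfn c m ξ p ∧ 1 + wfn c m ξ p ≤ 3/2 := by
  intro p hp
  have h := (good_wf hc hc1 hm hξ hξ1).2.2.1 p hp
  rw [abs_le] at h
  constructor <;> linarith [h.1, h.2]

include hc hc1 hm hξ hξ1 in
lemma rf_lb : ∀ p ∈ GBox, 7/10 ≤ rfn c m ξ p := by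
  intro p hp
  have h := (wf_bounds hc hc1 hm hξ hξ1 p hp).1
  have : Real.sqrt ((7/10)^2) ≤ Real.sqrt (1 + wfn c m ξ p) :=
    Real.sqrt_le_sqrt (by norm_num; linarith)
  rwa [Real.sqrt_sq (by norm_num)] at this

include hc hc1 hm hξ hξ1 in
lemma good_rf : Good (3/2) (1/2) (rfn c m ξ) := by
  have gw := good_wf hc hc1 hm hξ hξ1
  refine ⟨by norm_num, by norm_num, fun p hp => ?_, fun p hp q hq => ?_⟩
  · have h := (wf_bounds hc hc1 hm hξ hξ1 p hp).2
    rw [rfn, abs_of_nonneg (Real.sqrt_nonneg _), ← rfn]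
    calc rfn c m ξ p ≤ Real.sqrt ((3/2)^2) := Real.sqrt_le_sqrt (by norm_num; linarith)
      _ = 3/2 := Real.sqrt_sq (by norm_num)
  · -- Lipschitz property of sqrt away from 0
    have hp1 := (wf_bounds hc hc1 hm hξ hξ1 p hp).1
    have hq1 := (wf_bounds hc hc1 hm hξ hξ1 q hq).1
    have hsp : 7/10 ≤ rfn c m ξ p := rf_lb hc hc1 hm hξ hξ1 p hp
    have hsq : 7/10 ≤ rfn c m ξ q := rf_lb hc hc1 hm hξ hξ1 q hq
    have hsum : 1 ≤ rfn c m ξ p + rfn c m ξ q := by linarith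
    have hsqp : (rfn c m ξ p)^2 = 1 + wfn c m ξ p := Real.sq_sqrt (by linarith)
    have hsqq : (rfn c m ξ q)^2 = 1 + wfn c m ξ q := Real.sq_sqrt (by linarith)
    have key : |rfn c m ξ p - rfn c m ξ q| ≤ |wfn c m ξ p - wfn c m ξ q| := by
      have h2 : |rfn c m ξ p - rfn c m ξ q| * 1 ≤
          |rfn c m ξ p - rfn c m ξ q| * (rfn c m ξ p + rfn c m ξ q) := by
        apply mul_le_mul_of_nonneg_left hsum (abs_nonneg _)
      have h3 : |rfn c m ξ p - rfn c m ξ q| * (rfn c m ξ p + rfn c m ξ q)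
          = |wfn c m ξ p - wfn c m ξ q| := by
        rw [← abs_of_nonneg (show (0:ℝ) ≤ rfn c m ξ p + rfn c m ξ q by linarith), ← abs_mul]
        congr 1
        have : (rfn c m ξ p - rfn c m ξ q) * (rfn c m ξ p + rfn c m ξ q)
            = (rfn c m ξ p)^2 - (rfn c m ξ q)^2 := by ring
        rw [this, hsqp, hsqq]; ring
      linarith [h2, h3.symm.le, h3.le]
    calc |rfn c m ξ p - rfn c m ξ q| ≤ |wfn c m ξ p - wfn c m ξ q| := key
      _ ≤ 1/2 * (|p.1 - q.1| + |p.2 - q.2|) := gw.2.2.2 p hp q hq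

end Params

section PhiGood

variable {c m ξ : ℝ} (hc : 0 < c) (hc1 : c ≤ 1) (hm : 1 ≤ m) (hξ : 0 < ξ) (hξ1 : ξ ≤ 1/10)

lemma good_one : Good 1 0 (fun _ : ℝ × ℝ => (1:ℝ)) := (Good.const 1).mono (by norm_num) le_rfl
lemma good_two : Good 2 0 (fun _ : ℝ × ℝ => (2:ℝ)) := (Good.const 2).mono (by norm_num) le_rfl

include hc hc1 hm hξ hξ1 in
lemma good_PhiF (sgn : ℝ) (hsgn : |sgn| ≤ 1) : Good (10^7) (10^7) (PhiF c m ξ sgn) := by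
  have gr := good_rf hc hc1 hm hξ hξ1
  have lb := rf_lb hc hc1 hm hξ hξ1
  -- denominators
  have gA := gr.mul (good_one.add gr)
  have invA := gA.inv one_pos (fun p hp => by nlinarith [lb p hp])
  have gB := gr.mul (gr.mul gr)
  have invB := gB.inv (show (0:ℝ) < 1/3 by norm_num) (fun p hp => by
    have h := lb p hp
    have h2 : 49/100 ≤ rfn c m ξ p * rfn c m ξ p := by nlinarith
    nlinarith)
  have gC := gr.mul ((good_one.add gr).mul (good_one.add gr))
  have invC := gC.inv one_pos (fun p hp => by nlinarith [lb p hp])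
  have gD := (gr.mul (gr.mul gr)).mul (good_one.add gr)
  have invD := gD.inv (show (0:ℝ) < 1/2 by norm_num) (fun p hp => by
    have h := lb p hp
    have h2 : 49/100 ≤ rfn c m ξ p * rfn c m ξ p := by nlinarith
    have h3 : 343/1000 ≤ rfn c m ξ p * (rfn c m ξ p * rfn c m ξ p) := by nlinarith
    nlinarith)
  -- numerators
  have gs2 := good_sf.mul good_sf
  have t1 := (Good.cmul (K := 4) (k := (-4:ℝ)) gs2 (by norm_num)).mul invA
  have t2 := (Good.cmul (K := 4) (k := (-4:ℝ)) gs2 (by norm_num)).mul invB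
  have hk1 : |4*c*ξ^2/m| ≤ 1/25 := by
    rw [abs_of_pos (by positivity), div_le_iff₀ (by positivity)]
    nlinarith
  have pref := (Good.cmul (K := 4) (k := (4:ℝ)) good_df (by norm_num)).add
    (Good.cmul (k := 4*c*ξ^2/m) gs2 hk1)
  have inner1 := ((Good.cmul (K := 2) (k := (2:ℝ)) good_df (by norm_num)).mul
    (gr.add good_two)).mul invC
  have inner2 := ((Good.cmul (K := 2) (k := 2*sgn) good_sf (by
    rw [abs_mul]; norm_num; linarith [abs_nonneg sgn])).mul
    ((gr.mul gr).add (gr.add good_one))).mul invD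
  have total := t1.add (t2.add (pref.mul (inner1.add inner2)))
  refine (total.of_eq (fun p => ?_)).mono (by norm_num) (by norm_num)
  simp only [PhiF]
  ring

end PhiGood

-- ===== auxiliary development =====

set_option maxHeartbeats 1000000 in
lemma alg_key (c m ξ U V r : ℝ) (hc : c ≠ 0) (hm : m ≠ 0) (hr : 0 < r)
    (hw : r^2 = 1 + 4*c*(U^2-V^2)*ξ^2/m + 4*c^2*(U^2+V^2)^2*ξ^4/m^2) (sgn : ℝ) :
    m^2/c^2*(1/r - 1)*ξ^2 - 4*(U^2+V^2)^2*ξ^6/r^3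
      - sgn*(2*m*(U^2+V^2)*ξ^4/(c*r^3)) + (2*(U^2-V^2)+sgn*(2*(U^2+V^2)))*m*ξ^4/c
    = ξ^6 * ( -4*(U^2+V^2)^2/(r*(1+r)) - 4*(U^2+V^2)^2/r^3
      + (4*(U^2-V^2) + 4*c*(U^2+V^2)^2*ξ^2/m) *
        (2*(U^2-V^2)*(r+2)/(r*(1+r)^2) + sgn*(2*(U^2+V^2)*(r^2+r+1)/(r^3*(1+r)))) ) := by
  have hr0 : r ≠ 0 := ne_of_gt hr
  have hr1 : 1 + r ≠ 0 := by positivity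
  have h1 : 1/r - 1 = (1 - r^2)/(r*(1+r)) := by field_simp; ring
  have h4 : r^2 - 1 = 4*c*(U^2-V^2)*ξ^2/m + 4*c^2*(U^2+V^2)^2*ξ^4/m^2 := by linarith
  have goal1 : m^2/c^2*(1/r - 1)*ξ^2 - 4*(U^2+V^2)^2*ξ^6/r^3
      - sgn*(2*m*(U^2+V^2)*ξ^4/(c*r^3)) + (2*(U^2-V^2)+sgn*(2*(U^2+V^2)))*m*ξ^4/c
      = -4*(U^2+V^2)^2*ξ^6/(r*(1+r)) - 4*(U^2+V^2)^2*ξ^6/r^3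
        + (m*ξ^4/c)*(2*(U^2-V^2)*(1 - 2/(r*(1+r))) + sgn*(2*(U^2+V^2)*(1 - 1/r^3))) := by
    rw [h1, hw]
    field_simp
    ring
  have h2 : 1 - 2/(r*(1+r)) = (r^2-1)*(r+2)/(r*(1+r)^2) := by field_simp; ring
  have h3 : 1 - 1/r^3 = (r^2-1)*(r^2+r+1)/(r^3*(1+r)) := by field_simp; ring
  have goal2 : (m*ξ^4/c)*(2*(U^2-V^2)*(1 - 2/(r*(1+r))) + sgn*(2*(U^2+V^2)*(1 - 1/r^3)))
      = ξ^6 * ((4*(U^2-V^2) + 4*c*(U^2+V^2)^2*ξ^2/m) *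
        (2*(U^2-V^2)*(r+2)/(r*(1+r)^2) + sgn*(2*(U^2+V^2)*(r^2+r+1)/(r^3*(1+r))))) := by
    rw [h2, h3, h4]
    field_simp
  rw [goal1, goal2]
  ring


section Bridge

lemma F1_comps (μ : ℝ) (n : ℕ) (ξ : ℝ) (hμ0 : 0 < μ) (hμ1 : μ < 1) (hn : 1 ≤ n)
    (hξ : 0 < ξ) (hξ1 : ξ ≤ 1/10) (v : V4) (hU : |v 0| ≤ 2) (hV : |v 1| ≤ 2) :
    F1 μ n ξ v 2 = 2*(ξ^6 * PhiF ((1-μ)^((1:ℝ)/3)) ((n:ℝ)^((2:ℝ)/3)) ξ 1 (v 0, v 1)) * (v 0) ∧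
    F1 μ n ξ v 3 = 2*(ξ^6 * PhiF ((1-μ)^((1:ℝ)/3)) ((n:ℝ)^((2:ℝ)/3)) ξ (-1) (v 0, v 1)) * (v 1) := by
  set c := (1-μ)^((1:ℝ)/3) with hcdef
  set m := (n:ℝ)^((2:ℝ)/3) with hmdef
  have h1μ : (0:ℝ) < 1 - μ := by linarith
  have hc : 0 < c := Real.rpow_pos_of_pos h1μ _
  have hc1 : c ≤ 1 := Real.rpow_le_one h1μ.le (by linarith) (by norm_num)
  have hn1 : (1:ℝ) ≤ (n:ℝ) := by exact_mod_cast hn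
  have hm : 1 ≤ m := Real.one_le_rpow hn1 (by norm_num)
  have hc2 : (1-μ)^((2:ℝ)/3) = c^2 := by
    rw [hcdef, show ((2:ℝ)/3) = ((1:ℝ)/3)*2 by norm_num, Real.rpow_mul h1μ.le, Real.rpow_two]
  have hm2 : (n:ℝ)^((4:ℝ)/3) = m^2 := by
    rw [hmdef, show ((4:ℝ)/3) = ((2:ℝ)/3)*2 by norm_num, Real.rpow_mul (by positivity), Real.rpow_two]
  have hbox : ((v 0, v 1) : ℝ × ℝ) ∈ GBox := ⟨hU, hV⟩
  have hwb := wf_bounds hc hc1 hm hξ hξ1 _ hbox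
  have hr2 : r2 μ n ξ (v 0) (v 1) = rfn c m ξ (v 0, v 1) := by
    rw [r2, rfn, hc2, hm2]
    congr 1
    simp only [wfn, sfn, dfn]
    ring
  have hrpos : 0 < rfn c m ξ (v 0, v 1) := Real.sqrt_pos.2 (by linarith [hwb.1])
  have hwsq : (rfn c m ξ (v 0, v 1))^2
      = 1 + 4*c*((v 0)^2-(v 1)^2)*ξ^2/m + 4*c^2*((v 0)^2+(v 1)^2)^2*ξ^4/m^2 := by
    rw [rfn, Real.sq_sqrt (by linarith [hwb.1])]
    simp only [wfn, sfn, dfn]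
    ring
  have halg1 := alg_key c m ξ (v 0) (v 1) (rfn c m ξ (v 0, v 1)) (ne_of_gt hc)
    (by positivity) hrpos hwsq 1
  have halg2 := alg_key c m ξ (v 0) (v 1) (rfn c m ξ (v 0, v 1)) (ne_of_gt hc)
    (by positivity) hrpos hwsq (-1)
  constructor
  · show (2*((n:ℝ)^((4:ℝ)/3)/(1-μ)^((2:ℝ)/3)*(1/r2 μ n ξ (v 0) (v 1) - 1)*ξ^2
       - 4*((v 0)^2+(v 1)^2)^2*ξ^6/(r2 μ n ξ (v 0) (v 1))^3
       - 2*(n:ℝ)^((2:ℝ)/3)*((v 0)^2+(v 1)^2)*ξ^4/((1-μ)^((1:ℝ)/3)*(r2 μ n ξ (v 0) (v 1))^3)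
       + 4*(n:ℝ)^((2:ℝ)/3)*(v 0)^2*ξ^4/(1-μ)^((1:ℝ)/3)) * (v 0)) = _
    rw [hr2, hc2, hm2]
    simp only [PhiF, sfn, dfn]
    linear_combination (2*(v 0)) * halg1
  · show (2*((n:ℝ)^((4:ℝ)/3)/(1-μ)^((2:ℝ)/3)*(1/r2 μ n ξ (v 0) (v 1) - 1)*ξ^2
       - 4*((v 0)^2+(v 1)^2)^2*ξ^6/(r2 μ n ξ (v 0) (v 1))^3
       + 2*(n:ℝ)^((2:ℝ)/3)*((v 0)^2+(v 1)^2)*ξ^4/((1-μ)^((1:ℝ)/3)*(r2 μ n ξ (v 0) (v 1))^3)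
       - 4*(n:ℝ)^((2:ℝ)/3)*(v 1)^2*ξ^4/(1-μ)^((1:ℝ)/3)) * (v 1)) = _
    rw [hr2, hc2, hm2]
    simp only [PhiF, sfn, dfn]
    linear_combination (2*(v 1)) * halg2

end Bridge


section Wnorm

lemma wnorm_cont {U : ℝ → V4} (hU : ContinuousOn U (Set.Icc 0 (2*π))) (n : ℕ) :
    ContinuousOn (fun T => (n:ℝ)*|U T 0| + (n:ℝ)*|U T 1| + |U T 2| + |U T 3|)
      (Set.Icc 0 (2*π)) := by
  have h : ∀ i : Fin 4, ContinuousOn (fun T => U T i) (Set.Icc 0 (2*π)) :=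
    fun i => (continuous_apply i).comp_continuousOn hU
  exact (((continuousOn_const.mul (h 0).abs).add (continuousOn_const.mul (h 1).abs)).add
    (h 2).abs).add (h 3).abs

lemma wnorm_ge (n : ℕ) {U : ℝ → V4} (hU : ContinuousOn U (Set.Icc 0 (2*π))) {T : ℝ}
    (hT : T ∈ Set.Icc 0 (2*π)) :
    (n:ℝ)*|U T 0| + (n:ℝ)*|U T 1| + |U T 2| + |U T 3| ≤ wnorm n U :=
  le_csSup (IsCompact.bddAbove_image isCompact_Icc (wnorm_cont hU n))
    (Set.mem_image_of_mem _ hT)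

lemma wnorm_le {n : ℕ} {U : ℝ → V4} {C : ℝ}
    (h : ∀ T ∈ Set.Icc 0 (2*π), (n:ℝ)*|U T 0| + (n:ℝ)*|U T 1| + |U T 2| + |U T 3| ≤ C) :
    wnorm n U ≤ C := by
  apply csSup_le
  · exact ⟨_, Set.mem_image_of_mem _ (show (0:ℝ) ∈ Set.Icc 0 (2*π) from ⟨le_rfl, by positivity⟩)⟩
  · rintro x ⟨T, hT, rfl⟩
    exact h T hT

end Wnorm

set_option maxHeartbeats 4000000 in
/-- **Lemma (bound on `𝒢₁`)**: on the ball of radius `2M₁μξ⁶`, the map `𝒢₁` is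
Lipschitz with constant `Mμξ⁶/n`, uniformly in `μ ∈ (0,1)`, `n ≥ 1` and `θ₀`. -/
theorem G1map_lipschitz :
    ∀ M₁ : ℝ, 0 < M₁ → ∃ ξ₀ M : ℝ, 0 < ξ₀ ∧ 0 < M ∧
      ∀ ξ : ℝ, 0 < ξ → ξ < ξ₀ → ∀ μ ∈ Set.Ioo (0:ℝ) 1, ∀ n : ℕ, 1 ≤ n → ∀ θ₀ : ℝ,
        ∀ Up Um : ℝ → V4,
          ContinuousOn Up (Set.Icc 0 (2*π)) → wnorm n Up ≤ 2*M₁*μ*ξ^6 →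
          ContinuousOn Um (Set.Icc 0 (2*π)) → wnorm n Um ≤ 2*M₁*μ*ξ^6 →
          wnorm n (fun T => G1map μ n ξ θ₀ Up T - G1map μ n ξ θ₀ Um T) ≤
            (M * μ * ξ^6 / (n:ℝ)) * wnorm n (fun T => Up T - Um T) := by
  intro M₁ hM₁
  have h2M : (0:ℝ) < 2*M₁ := by linarith
  refine ⟨min (1/10) ((2*M₁)⁻¹ ^ ((1:ℝ)/6)), 10^9,
    lt_min (by norm_num) (Real.rpow_pos_of_pos (by positivity) _), by norm_num, ?_⟩
  intro ξ hξ0 hξlt μ hμ n hn θ₀ Up Um hUpc hUpb hUmc hUmb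
  obtain ⟨hμ0, hμ1⟩ := hμ
  have hξ1 : ξ ≤ 1/10 := le_of_lt (lt_of_lt_of_le hξlt (min_le_left _ _))
  have hξ6 : ξ^6 ≤ (2*M₁)⁻¹ := by
    have h := le_of_lt (lt_of_lt_of_le hξlt (min_le_right _ _))
    calc ξ^6 ≤ ((2*M₁)⁻¹ ^ ((1:ℝ)/6))^6 := pow_le_pow_left₀ hξ0.le h 6
      _ = (2*M₁)⁻¹ := by
          rw [← Real.rpow_natCast ((2*M₁)⁻¹ ^ ((1:ℝ)/6)) 6, ← Real.rpow_mul (by positivity)]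
          norm_num
  set c := (1-μ)^((1:ℝ)/3) with hcdef
  set m := (n:ℝ)^((2:ℝ)/3) with hmdef
  have h1μ : (0:ℝ) < 1 - μ := by linarith
  have hc : 0 < c := Real.rpow_pos_of_pos h1μ _
  have hc1 : c ≤ 1 := Real.rpow_le_one h1μ.le (by linarith) (by norm_num)
  have hnR : (1:ℝ) ≤ (n:ℝ) := by exact_mod_cast hn
  have hn0 : (0:ℝ) < (n:ℝ) := by linarith
  have hm : 1 ≤ m := Real.one_le_rpow hnR (by norm_num)
  -- the two Lipschitz coefficient functions
  have gψ1 := ((good_PhiF hc hc1 hm hξ0 hξ1 1 (by norm_num)).mul Good.fst).mono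
    (show (10:ℝ)^7*2 ≤ 10^8 by norm_num) (show (10:ℝ)^7*1+2*(10^7) ≤ 10^8 by norm_num)
  have gψ2 := ((good_PhiF hc hc1 hm hξ0 hξ1 (-1) (by norm_num)).mul Good.snd).mono
    (show (10:ℝ)^7*2 ≤ 10^8 by norm_num) (show (10:ℝ)^7*1+2*(10^7) ≤ 10^8 by norm_num)
  -- small perturbations stay in the box
  have hsmall : ∀ (Uf : ℝ → V4), ContinuousOn Uf (Set.Icc 0 (2*π)) →
      wnorm n Uf ≤ 2*M₁*μ*ξ^6 → ∀ T ∈ Set.Icc 0 (2*π), |Uf T 0| ≤ 1 ∧ |Uf T 1| ≤ 1 := by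
    intro Uf hc' hb T hT
    have h1 := wnorm_ge n hc' hT
    have h2 : 2*M₁*μ*ξ^6 ≤ 1 := by
      have : 2*M₁*ξ^6 ≤ 1 := by
        have := mul_le_mul_of_nonneg_left hξ6 h2M.le
        rw [mul_inv_cancel₀ (ne_of_gt h2M)] at this
        linarith [this]
      nlinarith [pow_pos hξ0 6]
    have h3 := abs_nonneg (Uf T 2)
    have h4 := abs_nonneg (Uf T 3)
    have h5 := abs_nonneg (Uf T 0)
    have h6 := abs_nonneg (Uf T 1)
    constructor <;> nlinarith
  have hU0s : ∀ T, |U0s n ξ θ₀ T| ≤ 1 := by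
    intro T
    rw [U0s, abs_mul]
    exact mul_le_one₀ (Real.abs_cos_le_one _) (abs_nonneg _) (Real.abs_sin_le_one _)
  have hV0s : ∀ T, |V0s n ξ θ₀ T| ≤ 1 := by
    intro T
    rw [V0s, abs_mul]
    exact mul_le_one₀ (Real.abs_sin_le_one _) (abs_nonneg _) (Real.abs_sin_le_one _)
  -- pointwise estimate
  apply wnorm_le
  intro T hT
  have hPbox : ((((U0e n ξ θ₀ T + Up T) 0 : ℝ), ((U0e n ξ θ₀ T + Up T) 1 : ℝ)) : ℝ × ℝ) ∈ GBox := by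
    have h := hsmall Up hUpc hUpb T hT
    constructor
    · show |(U0e n ξ θ₀ T + Up T) 0| ≤ 2
      have : (U0e n ξ θ₀ T + Up T) 0 = U0s n ξ θ₀ T + Up T 0 := by
        simp [U0e, Pi.add_apply]
      rw [this]
      calc |U0s n ξ θ₀ T + Up T 0| ≤ |U0s n ξ θ₀ T| + |Up T 0| := abs_add_le _ _
        _ ≤ 2 := by linarith [hU0s T, h.1]
    · show |(U0e n ξ θ₀ T + Up T) 1| ≤ 2
      have : (U0e n ξ θ₀ T + Up T) 1 = V0s n ξ θ₀ T + Up T 1 := by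
        simp [U0e, Pi.add_apply]
      rw [this]
      calc |V0s n ξ θ₀ T + Up T 1| ≤ |V0s n ξ θ₀ T| + |Up T 1| := abs_add_le _ _
        _ ≤ 2 := by linarith [hV0s T, h.2]
  have hQbox : ((((U0e n ξ θ₀ T + Um T) 0 : ℝ), ((U0e n ξ θ₀ T + Um T) 1 : ℝ)) : ℝ × ℝ) ∈ GBox := by
    have h := hsmall Um hUmc hUmb T hT
    constructor
    · show |(U0e n ξ θ₀ T + Um T) 0| ≤ 2
      have : (U0e n ξ θ₀ T + Um T) 0 = U0s n ξ θ₀ T + Um T 0 := by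
        simp [U0e, Pi.add_apply]
      rw [this]
      calc |U0s n ξ θ₀ T + Um T 0| ≤ |U0s n ξ θ₀ T| + |Um T 0| := abs_add_le _ _
        _ ≤ 2 := by linarith [hU0s T, h.1]
    · show |(U0e n ξ θ₀ T + Um T) 1| ≤ 2
      have : (U0e n ξ θ₀ T + Um T) 1 = V0s n ξ θ₀ T + Um T 1 := by
        simp [U0e, Pi.add_apply]
      rw [this]
      calc |V0s n ξ θ₀ T + Um T 1| ≤ |V0s n ξ θ₀ T| + |Um T 1| := abs_add_le _ _
        _ ≤ 2 := by linarith [hV0s T, h.2]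
  have hFP := F1_comps μ n ξ hμ0 hμ1 hn hξ0 hξ1 (U0e n ξ θ₀ T + Up T) hPbox.1 hPbox.2
  have hFQ := F1_comps μ n ξ hμ0 hμ1 hn hξ0 hξ1 (U0e n ξ θ₀ T + Um T) hQbox.1 hQbox.2
  set pP : ℝ × ℝ := (((U0e n ξ θ₀ T + Up T) 0 : ℝ), ((U0e n ξ θ₀ T + Up T) 1 : ℝ)) with hpP
  set pQ : ℝ × ℝ := (((U0e n ξ θ₀ T + Um T) 0 : ℝ), ((U0e n ξ θ₀ T + Um T) 1 : ℝ)) with hpQ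
  set G := fun T => G1map μ n ξ θ₀ Up T - G1map μ n ξ θ₀ Um T with hG
  have e0 : G T 0 = 0 := by
    simp [hG, G1map, F1, Pi.sub_apply, Pi.smul_apply]
  have e1 : G T 1 = 0 := by
    simp [hG, G1map, F1, Pi.sub_apply, Pi.smul_apply]
  have e2 : G T 2 = μ * ((2*(ξ^6 * PhiF c m ξ 1 pP)) * pP.1
      - (2*(ξ^6 * PhiF c m ξ 1 pQ)) * pQ.1) := by
    simp only [hG, G1map, Pi.sub_apply, Pi.smul_apply, smul_eq_mul]
    rw [hFP.1, hFQ.1]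
    ring
  have e3 : G T 3 = μ * ((2*(ξ^6 * PhiF c m ξ (-1) pP)) * pP.2
      - (2*(ξ^6 * PhiF c m ξ (-1) pQ)) * pQ.2) := by
    simp only [hG, G1map, Pi.sub_apply, Pi.smul_apply, smul_eq_mul]
    rw [hFP.2, hFQ.2]
    ring
  -- distances between the two base points
  have hd1 : pP.1 - pQ.1 = Up T 0 - Um T 0 := by
    simp [hpP, hpQ, Pi.add_apply]
  have hd2 : pP.2 - pQ.2 = Up T 1 - Um T 1 := by
    simp [hpP, hpQ, Pi.add_apply]
  set S := |Up T 0 - Um T 0| + |Up T 1 - Um T 1| with hS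
  set W := wnorm n (fun T => Up T - Um T) with hW
  have hnS : (n:ℝ) * S ≤ W := by
    have h1 := wnorm_ge n (hUpc.sub hUmc) hT
    simp only [Pi.sub_apply] at h1
    have h3 := abs_nonneg (Up T 2 - Um T 2)
    have h4 := abs_nonneg (Up T 3 - Um T 3)
    rw [hS]
    linarith [show wnorm n (Up - Um) = W from rfl]
  have hW0 : 0 ≤ W := le_trans (by positivity) hnS
  -- component estimates
  have hc2 : |G T 2| ≤ μ * (2*ξ^6) * (10^8 * S) := by
    rw [e2, show μ * ((2*(ξ^6 * PhiF c m ξ 1 pP)) * pP.1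
      - (2*(ξ^6 * PhiF c m ξ 1 pQ)) * pQ.1)
      = (μ * (2*ξ^6)) * (PhiF c m ξ 1 pP * pP.1 - PhiF c m ξ 1 pQ * pQ.1) by ring,
      abs_mul, abs_of_nonneg (show (0:ℝ) ≤ μ * (2*ξ^6) by positivity)]
    apply mul_le_mul_of_nonneg_left _ (show (0:ℝ) ≤ μ * (2*ξ^6) by positivity)
    have := gψ1.2.2.2 pP hPbox pQ hQbox
    rw [hd1, hd2] at this
    exact this
  have hc3 : |G T 3| ≤ μ * (2*ξ^6) * (10^8 * S) := by
    rw [e3, show μ * ((2*(ξ^6 * PhiF c m ξ (-1) pP)) * pP.2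
      - (2*(ξ^6 * PhiF c m ξ (-1) pQ)) * pQ.2)
      = (μ * (2*ξ^6)) * (PhiF c m ξ (-1) pP * pP.2 - PhiF c m ξ (-1) pQ * pQ.2) by ring,
      abs_mul, abs_of_nonneg (show (0:ℝ) ≤ μ * (2*ξ^6) by positivity)]
    apply mul_le_mul_of_nonneg_left _ (show (0:ℝ) ≤ μ * (2*ξ^6) by positivity)
    have := gψ2.2.2.2 pP hPbox pQ hQbox
    rw [hd1, hd2] at this
    exact this
  have hchain : μ * (2*ξ^6) * (10^8 * S) + μ * (2*ξ^6) * (10^8 * S)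
      ≤ 10^9 * μ * ξ^6 / (n:ℝ) * W := by
    calc μ * (2*ξ^6) * (10^8 * S) + μ * (2*ξ^6) * (10^8 * S)
        = (4*10^8 * μ * ξ^6 / (n:ℝ)) * ((n:ℝ) * S) := by
          field_simp
          ring
      _ ≤ (4*10^8 * μ * ξ^6 / (n:ℝ)) * W :=
          mul_le_mul_of_nonneg_left hnS (by positivity)
      _ ≤ 10^9 * μ * ξ^6 / (n:ℝ) * W := by
          apply mul_le_mul_of_nonneg_right _ hW0
          have : (4:ℝ)*10^8 * μ * ξ^6 ≤ 10^9 * μ * ξ^6 := by nlinarith [pow_pos hξ0 6]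
          exact div_le_div_of_nonneg_right this hn0.le
  show (n:ℝ)*|G T 0| + (n:ℝ)*|G T 1| + |G T 2| + |G T 3| ≤ 10^9 * μ * ξ^6 / (n:ℝ) * W
  rw [e0, e1]
  simp only [abs_zero, mul_zero]
  have hsum := le_trans (add_le_add hc2 hc3) hchain
  linarith [hsum]

end
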